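/- Let N be a natural number and let f : E → (ℚ≥0)^(N+1) be a function with self-bounding denominators, witnessed by increasing functions D_i : (ℚ≥0)^i → ℤ>0 for 1 ≤ i ≤ N. Define F : E → (ℤ≥0)^(N+1) by letting the first component of F(x) equal the first component of f(x), and for 1 ≤ i ≤ N letting the (i+1)-th component of F(x) equal D_i(pr_{≤i}(f(x))) · pr_{i+1}(f(x)). Then for all x, y ∈ E one has f(x) ≤ f(y) in the lexicographic order if and only if F(x) ≤ F(y) in the lexicographic order. (Paper's Fact III.b.) -/

import Mathlib

open scoped NNRat

/-- **Paper's Fact III.b.** If `f : E → (ℚ≥0)^(N+1)` has self-bounding denominators,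
witnessed by positive-integer-valued, lexicographically increasing functions `D i`, and
`F : E → (ℤ≥0)^(N+1)` is obtained from `f` by keeping the first component and multiplying the
`(i+1)`-th component by `D i` applied to the first `i` components, then `f` and `F` induce the
same lexicographic comparison on `E`. -/
theorem fact_III_b (N : ℕ) (E : Type*) (f : E → Fin (N + 1) → ℚ≥0)
    -- (i) the first projection of `f` is integer valued
    (hf0 : ∀ x : E, ∃ n : ℕ, f x 0 = (n : ℚ≥0))
    -- (ii) the self-bounding witnesses `D i : (ℚ≥0)^(i+1) → ℤ>0` for `i+1 = 1, …, N`
    (D : (i : Fin N) → (Fin (i.1 + 1) → ℚ≥0) → ℕ)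
    (hDpos : ∀ (i : Fin N) (v : Fin (i.1 + 1) → ℚ≥0), 0 < D i v)
    (hDmono : ∀ (i : Fin N) (v w : Fin (i.1 + 1) → ℚ≥0),
      toLex v ≤ toLex w → D i v ≤ D i w)
    (hDint : ∀ (x : E) (i : Fin N), ∃ n : ℕ,
      (D i (fun j => f x (Fin.castLE (Nat.le_succ_of_le i.isLt) j)) : ℚ≥0) * f x i.succ
        = (n : ℚ≥0))
    -- the function `F : E → (ℤ≥0)^(N+1)`
    (F : E → Fin (N + 1) → ℕ)
    (hF0 : ∀ x : E, (F x 0 : ℚ≥0) = f x 0)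
    (hFsucc : ∀ (x : E) (i : Fin N), (F x i.succ : ℚ≥0) =
      (D i (fun j => f x (Fin.castLE (Nat.le_succ_of_le i.isLt) j)) : ℚ≥0) * f x i.succ) :
    ∀ x y : E, toLex (f x) ≤ toLex (f y) ↔ toLex (F x) ≤ toLex (F y) := by

  -- prefixes agree
  have hpre : ∀ (x y : E) (k : Fin N), (∀ j : Fin (N+1), j < k.succ → f x j = f y j) →
      (fun j => f x (Fin.castLE (Nat.le_succ_of_le k.isLt) j))
        = (fun j => f y (Fin.castLE (Nat.le_succ_of_le k.isLt) j)) := by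
    intro x y k h
    funext j
    apply h
    show (j : ℕ) < (k.succ : ℕ)
    simp only [Fin.coe_castLE, Fin.val_succ]; exact j.isLt
  -- key : strict lex order transfers
  have key : ∀ x y : E, toLex (f x) < toLex (f y) → toLex (F x) < toLex (F y) := by
    intro x y h
    obtain ⟨i, hj, hi⟩ := h
    refine ⟨i, ?_, ?_⟩
    · intro j hjlt
      induction j using Fin.cases with
      | zero =>
        have : (F x 0 : ℚ≥0) = (F y 0 : ℚ≥0) := by
          rw [hF0, hF0]; exact hj 0 hjlt
        exact_mod_cast this
      | succ k =>
        have hagree : ∀ j : Fin (N+1), j < k.succ → f x j = f y j :=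
          fun j hjk => hj j (hjk.trans hjlt)
        have : (F x k.succ : ℚ≥0) = (F y k.succ : ℚ≥0) := by
          rw [hFsucc, hFsucc, hpre x y k hagree, show f x k.succ = f y k.succ from hj k.succ hjlt]
        exact_mod_cast this
    · induction i using Fin.cases with
      | zero =>
        have : (F x 0 : ℚ≥0) < (F y 0 : ℚ≥0) := by
          rw [hF0, hF0]; exact hi
        exact_mod_cast this
      | succ k =>
        have : (F x k.succ : ℚ≥0) < (F y k.succ : ℚ≥0) := by
          rw [hFsucc, hFsucc, hpre x y k hj]
          exact mul_lt_mul_of_pos_left hi (by exact_mod_cast hDpos k _)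
        exact_mod_cast this
  -- equality transfers
  have keq : ∀ x y : E, f x = f y → F x = F y := by
    intro x y h
    funext j
    induction j using Fin.cases with
    | zero =>
      have : (F x 0 : ℚ≥0) = (F y 0 : ℚ≥0) := by rw [hF0, hF0, h]
      exact_mod_cast this
    | succ k =>
      have : (F x k.succ : ℚ≥0) = (F y k.succ : ℚ≥0) := by rw [hFsucc, hFsucc, h]
      exact_mod_cast this
  intro x y
  constructor
  · intro h
    rcases h.lt_or_eq with h | h
    · exact (key x y h).le
    · have : f x = f y := toLex.injective h
      rw [keq x y this]
  · intro h
    have tri := (@Pi.isTrichotomous_lex (Fin (N + 1)) (fun _ => ℚ≥0) (· < ·)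
      (fun {_} => (· < ·)) (fun _ => inferInstance) wellFounded_lt).trichotomous (f x) (f y)
    rcases (em (Pi.Lex (· < ·) (fun {_} => (· < ·)) (f x) (f y))).imp_right (fun h1 => (em (Pi.Lex (· < ·) (fun {_} => (· < ·)) (f y) (f x))).elim Or.inr (fun h2 => Or.inl (tri h1 h2))) with h' | h' | h'
    · exact le_of_lt h'
    · exact le_of_eq (congrArg toLex h')
    · exact absurd ((key y x h').trans_le h) (lt_irrefl _)
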